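/- (Energy comparison in Proposition 'electricity') Let G = (V,E) be a finite graph, p ∈ (0,1/2], μ the Bernoulli(p) product measure on {0,1}^V conditioned on at least one particle. For a configuration ω (identified with its set of particles) define F_ω(u) = f(ω ∪ {u}). Then ½ Σ_{ω∈Ω₊} p·μ(ω) Σ_{(u,v)∈E⃗} (F_ω(v) − F_ω(u))² ≤ 4·D(f), where D is the CBSEP Dirichlet form. -/
import Mathlib
set_option linter.unusedSectionVars false


open Finset

variable {V : Type*} [Fintype V] [DecidableEq V]

/-- Number of particles of a configuration. -/
def Np (ω : V → Bool) : ℕ := (Finset.univ.filter (fun x => ω x = true)).card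

/-- Configurations with at least one particle. -/
def OmegaPlus (V : Type*) [Fintype V] [DecidableEq V] : Finset (V → Bool) :=
  Finset.univ.filter (fun ω => 0 < Np ω)

/-- Bernoulli(p) product weight. -/
def bern (p : ℝ) (ω : V → Bool) : ℝ := ∏ x, if ω x = true then p else 1 - p

/-- The measure `π` conditioned on at least one particle (weight on `OmegaPlus`). -/
noncomputable def mu (p : ℝ) (ω : V → Bool) : ℝ := bern p ω / (1 - (1 - p) ^ Fintype.card V)

/-- Fill vertex `x` with a particle. -/
def fill (ω : V → Bool) (x : V) : V → Bool := Function.update ω x true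

/-- Flip the state at vertex `x`. -/
def flipAt (ω : V → Bool) (x : V) : V → Bool := Function.update ω x (!ω x)

/-- Variance of `f` under resampling the states at `x, y` from `π_x ⊗ π_y`
conditioned on the edge being non-empty. -/
noncomputable def edgeVar (p : ℝ) (f : (V → Bool) → ℝ) (x y : V) (ω : V → Bool) : ℝ :=
  let u : Bool → Bool → ℝ := fun a b => f (Function.update (Function.update ω x a) y b)
  let m : ℝ := ((1 - p) / (2 - p)) * u true false + ((1 - p) / (2 - p)) * u false true +
      (p / (2 - p)) * u true true
  ((1 - p) / (2 - p)) * (u true false - m) ^ 2 + ((1 - p) / (2 - p)) * (u false true - m) ^ 2 +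
    (p / (2 - p)) * (u true true - m) ^ 2

/-- The CBSEP Dirichlet form `D(f) = Σ_{e∈E} μ(𝟙_{E_e} Var_e(f | E_e))`,
written as half the sum over oriented edges. -/
noncomputable def dirichlet (G : SimpleGraph V) [DecidableRel G.Adj] (p : ℝ)
    (f : (V → Bool) → ℝ) : ℝ :=
  (1 / 2) * ∑ x, ∑ y ∈ G.neighborFinset x,
    ∑ ω ∈ (OmegaPlus V).filter (fun ω => ω x = true ∨ ω y = true), mu p ω * edgeVar p f x y ω


lemma upd_self (ω : V → Bool) (x : V) {b : Bool} (h : ω x = b) : Function.update ω x b = ω := by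
  rw [← h]; exact Function.update_eq_self x ω

lemma bern_nonneg {p : ℝ} (hp0 : 0 < p) (hp : p ≤ 1 / 2) (ω : V → Bool) : 0 ≤ bern p ω := by
  refine Finset.prod_nonneg fun v _ => ?_
  split <;> linarith

lemma mu_nonneg [Nonempty V] {p : ℝ} (hp0 : 0 < p) (hp : p ≤ 1 / 2) (ω : V → Bool) :
    0 ≤ mu p ω := by
  have h1 : (1 - p) ^ Fintype.card V < 1 :=
    pow_lt_one₀ (by linarith) (by linarith) Fintype.card_ne_zero
  exact div_nonneg (bern_nonneg hp0 hp ω) (by linarith)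

lemma bern_update {p : ℝ} (ω : V → Bool) (x : V) (h : ω x = false) :
    p * bern p ω = (1 - p) * bern p (Function.update ω x true) := by
  unfold bern
  rw [← Finset.mul_prod_erase Finset.univ _ (Finset.mem_univ x),
    ← Finset.mul_prod_erase Finset.univ
      (fun v => if Function.update ω x true v = true then p else 1 - p) (Finset.mem_univ x)]
  have hprod : ∏ v ∈ Finset.univ.erase x, (if Function.update ω x true v = true then p else 1 - p)
      = ∏ v ∈ Finset.univ.erase x, (if ω v = true then p else 1 - p) := by
    refine Finset.prod_congr rfl fun v hv => ?_
    rw [Function.update_of_ne (Finset.ne_of_mem_erase hv)]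
  rw [hprod, h, Function.update_self]
  simp only [Bool.false_eq_true, if_false, if_true]
  ring

lemma mu_update {p : ℝ} (ω : V → Bool) (x : V) (h : ω x = false) :
    p * mu p ω = (1 - p) * mu p (Function.update ω x true) := by
  unfold mu
  rw [← mul_div_assoc, ← mul_div_assoc, bern_update ω x h]

lemma fill_mem_OmegaPlus (ω : V → Bool) (x : V) : Function.update ω x true ∈ OmegaPlus V := by
  simp only [OmegaPlus, Finset.mem_filter, Finset.mem_univ, true_and, Np, Finset.card_pos]
  exact ⟨x, by simp [Function.update_self]⟩

lemma edgeVar_nonneg {p : ℝ} (hp0 : 0 < p) (hp : p ≤ 1 / 2) (f : (V → Bool) → ℝ)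
    (x y : V) (ω : V → Bool) : 0 ≤ edgeVar p f x y ω := by
  have hq : (0:ℝ) < 2 - p := by linarith
  have ha : (0:ℝ) ≤ (1 - p) / (2 - p) := div_nonneg (by linarith) hq.le
  have hb : (0:ℝ) ≤ p / (2 - p) := div_nonneg hp0.le hq.le
  simp only [edgeVar]
  refine add_nonneg (add_nonneg (mul_nonneg ha (sq_nonneg _)) (mul_nonneg ha (sq_nonneg _)))
    (mul_nonneg hb (sq_nonneg _))


set_option maxHeartbeats 1000000 in
set_option maxHeartbeats 1000000 in
lemma keyQ (p A B C : ℝ) (hp0 : 0 < p) (hp : p ≤ 1 / 2) :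
    p * (C - A) ^ 2 + (1 - p) / 2 * (B - A) ^ 2 ≤
    4 * (((1 - p) / (2 - p)) * (A - (((1 - p) / (2 - p)) * A + ((1 - p) / (2 - p)) * B +
        (p / (2 - p)) * C)) ^ 2 +
      ((1 - p) / (2 - p)) * (B - (((1 - p) / (2 - p)) * A + ((1 - p) / (2 - p)) * B +
        (p / (2 - p)) * C)) ^ 2 +
      (p / (2 - p)) * (C - (((1 - p) / (2 - p)) * A + ((1 - p) / (2 - p)) * B +
        (p / (2 - p)) * C)) ^ 2) := by
  have hq : (0:ℝ) < 2 - p := by linarith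
  have hu : (0:ℝ) ≤ 1 - 2*p := by linarith
  set s : ℝ := B - A with hs
  set t : ℝ := C - A with ht
  set α : ℝ := 4 - 2*p - 5*p^2 + 7/2*p^3 - 1/2*p^4 with hα
  set γ : ℝ := -16*p + 24*p^2 - 8*p^3 with hγ
  set δ : ℝ := 128*p - 512*p^2 + 736*p^3 - 480*p^4 + 152*p^5 - 32*p^6 + 10*p^7 - 2*p^8 with hδ
  have hαpos : 0 < α := by
    rw [hα]
    nlinarith [mul_nonneg hp0.le hu, mul_nonneg (pow_nonneg hp0.le 3) (by linarith : (0:ℝ) ≤ 7 - p)]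
  have hδnn : 0 ≤ δ := by
    rw [hδ]
    nlinarith [mul_nonneg hp0.le hu, mul_nonneg hp0.le (pow_nonneg hu 2),
      mul_nonneg hp0.le (pow_nonneg hu 3), mul_nonneg hp0.le (pow_nonneg hu 4),
      mul_nonneg hp0.le (pow_nonneg hu 5), mul_nonneg hp0.le (pow_nonneg hu 6),
      mul_nonneg hp0.le (pow_nonneg hu 7)]
  set D : ℝ := (4 * (((1 - p) / (2 - p)) * (A - (((1 - p) / (2 - p)) * A + ((1 - p) / (2 - p)) * B +
        (p / (2 - p)) * C)) ^ 2 +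
      ((1 - p) / (2 - p)) * (B - (((1 - p) / (2 - p)) * A + ((1 - p) / (2 - p)) * B +
        (p / (2 - p)) * C)) ^ 2 +
      (p / (2 - p)) * (C - (((1 - p) / (2 - p)) * A + ((1 - p) / (2 - p)) * B +
        (p / (2 - p)) * C)) ^ 2)) - (p * (C - A) ^ 2 + (1 - p) / 2 * (B - A) ^ 2) with hD
  have hid : 4 * α * ((2 - p)^3 * D) = (2*α*s + γ*t)^2 + δ * t^2 := by
    rw [hD, hα, hγ, hδ, hs, ht]
    field_simp
    ring
  have h1 : 0 ≤ 4 * α * ((2 - p)^3 * D) := by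
    rw [hid]
    have := sq_nonneg (2*α*s + γ*t)
    have := mul_nonneg hδnn (sq_nonneg t)
    linarith
  have h2 : 0 ≤ D := by
    by_contra hc
    push_neg at hc
    have h3 : (2-p)^3 * D < 0 := mul_neg_of_pos_of_neg (by positivity) hc
    have h4 : 4 * α * ((2-p)^3 * D) < 0 := mul_neg_of_pos_of_neg (by positivity) h3
    linarith
  rw [hD] at h2
  linarith

lemma edge_bound (p : ℝ) (hp0 : 0 < p) (hp : p ≤ 1 / 2) (f : (V → Bool) → ℝ) (x y : V)
    (hxy : x ≠ y) :
    ∑ ω ∈ OmegaPlus V, p * mu p ω * (f (fill ω y) - f (fill ω x)) ^ 2 ≤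
    4 * ∑ ω ∈ (OmegaPlus V).filter (fun ω => ω x = true ∨ ω y = true),
        mu p ω * edgeVar p f x y ω := by
  have hne : Nonempty V := ⟨x⟩
  have hmu : ∀ ω : V → Bool, 0 ≤ mu p ω := mu_nonneg hp0 hp
  have hq : (0:ℝ) < 2 - p := by linarith
  set P := OmegaPlus V with hP
  set sTT := P.filter (fun ω => ω x = true ∧ ω y = true) with hsTT
  set sTF := P.filter (fun ω => ω x = true ∧ ¬ω y = true) with hsTF
  set sFT := P.filter (fun ω => ¬ω x = true ∧ ω y = true) with hsFT
  set sFF := P.filter (fun ω => ¬ω x = true ∧ ¬ω y = true) with hsFF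
  set T : (V → Bool) → ℝ := fun ω => p * mu p ω * (f (fill ω y) - f (fill ω x)) ^ 2 with hT
  set k1 : (V → Bool) → ℝ := fun σ => (1/2) * ((1 - p) * mu p σ *
    (f (Function.update (Function.update σ x false) y true) - f σ) ^ 2) with hk1
  set k2 : (V → Bool) → ℝ := fun σ => (1/2) * ((1 - p) * mu p σ *
    (f σ - f (Function.update (Function.update σ x true) y false)) ^ 2) with hk2
  set R : (V → Bool) → ℝ := fun σ => mu p σ * edgeVar p f x y σ with hR
  have hRnn : ∀ σ, 0 ≤ R σ := fun σ => mul_nonneg (hmu σ) (edgeVar_nonneg hp0 hp f x y σ)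
  have hk1nn : ∀ σ, 0 ≤ k1 σ := fun σ =>
    mul_nonneg (by norm_num)
      (mul_nonneg (mul_nonneg (by linarith) (hmu σ)) (sq_nonneg _))
  have hk2nn : ∀ σ, 0 ≤ k2 σ := fun σ =>
    mul_nonneg (by norm_num)
      (mul_nonneg (mul_nonneg (by linarith) (hmu σ)) (sq_nonneg _))
  have hsplit : ∀ g : (V → Bool) → ℝ, ∑ ω ∈ P, g ω =
      ((∑ ω ∈ sTT, g ω) + ∑ ω ∈ sTF, g ω) + ((∑ ω ∈ sFT, g ω) + ∑ ω ∈ sFF, g ω) := by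
    intro g
    rw [← Finset.sum_filter_add_sum_filter_not P (fun ω => ω x = true) g,
      ← Finset.sum_filter_add_sum_filter_not (P.filter (fun ω => ω x = true))
        (fun ω => ω y = true) g,
      ← Finset.sum_filter_add_sum_filter_not (P.filter (fun ω => ¬ω x = true))
        (fun ω => ω y = true) g,
      Finset.filter_filter, Finset.filter_filter, Finset.filter_filter, Finset.filter_filter]
  have hTT0 : ∑ ω ∈ sTT, T ω = 0 := by
    refine Finset.sum_eq_zero fun ω hω => ?_
    obtain ⟨hωP, h1, h2⟩ := Finset.mem_filter.mp hω
    simp only [hT, fill]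
    rw [upd_self ω x h1, upd_self ω y h2]
    ring
  -- FF part, first half into sTF
  have hFF1 : ∑ ω ∈ sFF, (1/2) * T ω ≤ ∑ σ ∈ sTF, k1 σ := by
    have hstep : ∑ ω ∈ sFF, (1/2) * T ω = ∑ ω ∈ sFF, k1 (Function.update ω x true) := by
      refine Finset.sum_congr rfl fun ω hω => ?_
      obtain ⟨hωP, h1, h2⟩ := Finset.mem_filter.mp hω
      rw [Bool.not_eq_true] at h1 h2
      simp only [hT, hk1, fill]
      rw [Function.update_idem, upd_self ω x h1, mu_update ω x h1]
    have hinj : ∀ a ∈ sFF, ∀ b ∈ sFF,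
        Function.update a x true = Function.update b x true → a = b := by
      intro a ha b hb h
      obtain ⟨-, ha1, -⟩ := Finset.mem_filter.mp ha
      obtain ⟨-, hb1, -⟩ := Finset.mem_filter.mp hb
      rw [Bool.not_eq_true] at ha1 hb1
      funext v
      by_cases hv : v = x
      · subst hv; rw [ha1, hb1]
      · have := congrFun h v
        rwa [Function.update_of_ne hv, Function.update_of_ne hv] at this
    rw [hstep, ← Finset.sum_image hinj]
    refine Finset.sum_le_sum_of_subset_of_nonneg ?_ (fun σ _ _ => hk1nn σ)
    intro σ hσ
    obtain ⟨ω, hω, rfl⟩ := Finset.mem_image.mp hσ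
    obtain ⟨hωP, h1, h2⟩ := Finset.mem_filter.mp hω
    refine Finset.mem_filter.mpr ⟨fill_mem_OmegaPlus ω x, ⟨Function.update_self x true ω, ?_⟩⟩
    rw [Function.update_of_ne (Ne.symm hxy)]
    exact h2
  -- FF part, second half into sFT
  have hFF2 : ∑ ω ∈ sFF, (1/2) * T ω ≤ ∑ σ ∈ sFT, k2 σ := by
    have hstep : ∑ ω ∈ sFF, (1/2) * T ω = ∑ ω ∈ sFF, k2 (Function.update ω y true) := by
      refine Finset.sum_congr rfl fun ω hω => ?_
      obtain ⟨hωP, h1, h2⟩ := Finset.mem_filter.mp hω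
      rw [Bool.not_eq_true] at h1 h2
      simp only [hT, hk2, fill]
      have e1 : Function.update (Function.update (Function.update ω y true) x true) y false
          = Function.update ω x true := by
        rw [Function.update_comm (Ne.symm hxy) true true ω, Function.update_idem]
        exact upd_self _ y (by rw [Function.update_of_ne (Ne.symm hxy)]; exact h2)
      rw [e1, mu_update ω y h2]
    have hinj : ∀ a ∈ sFF, ∀ b ∈ sFF,
        Function.update a y true = Function.update b y true → a = b := by
      intro a ha b hb h
      obtain ⟨-, -, ha2⟩ := Finset.mem_filter.mp ha
      obtain ⟨-, -, hb2⟩ := Finset.mem_filter.mp hb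
      rw [Bool.not_eq_true] at ha2 hb2
      funext v
      by_cases hv : v = y
      · subst hv; rw [ha2, hb2]
      · have := congrFun h v
        rwa [Function.update_of_ne hv, Function.update_of_ne hv] at this
    rw [hstep, ← Finset.sum_image hinj]
    refine Finset.sum_le_sum_of_subset_of_nonneg ?_ (fun σ _ _ => hk2nn σ)
    intro σ hσ
    obtain ⟨ω, hω, rfl⟩ := Finset.mem_image.mp hσ
    obtain ⟨hωP, h1, h2⟩ := Finset.mem_filter.mp hω
    refine Finset.mem_filter.mpr ⟨fill_mem_OmegaPlus ω y, ⟨?_, Function.update_self y true ω⟩⟩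
    rw [Function.update_of_ne hxy]
    exact h1
  -- termwise bounds
  have hTFb : ∀ σ ∈ sTF, T σ + k1 σ ≤ 4 * R σ := by
    intro σ hσ
    obtain ⟨hσP, h1, h2⟩ := Finset.mem_filter.mp hσ
    rw [Bool.not_eq_true] at h2
    have e1 : Function.update σ x true = σ := upd_self σ x h1
    have e2 : Function.update σ y false = σ := upd_self σ y h2
    have hEV : edgeVar p f x y σ =
        ((1 - p) / (2 - p)) * (f σ - (((1 - p) / (2 - p)) * f σ +
          ((1 - p) / (2 - p)) * f (Function.update (Function.update σ x false) y true) +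
          (p / (2 - p)) * f (Function.update σ y true))) ^ 2 +
        ((1 - p) / (2 - p)) * (f (Function.update (Function.update σ x false) y true) -
          (((1 - p) / (2 - p)) * f σ +
          ((1 - p) / (2 - p)) * f (Function.update (Function.update σ x false) y true) +
          (p / (2 - p)) * f (Function.update σ y true))) ^ 2 +
        (p / (2 - p)) * (f (Function.update σ y true) - (((1 - p) / (2 - p)) * f σ +
          ((1 - p) / (2 - p)) * f (Function.update (Function.update σ x false) y true) +
          (p / (2 - p)) * f (Function.update σ y true))) ^ 2 := by
      simp only [edgeVar]
      rw [e1, e2]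
    have hk := keyQ p (f σ) (f (Function.update (Function.update σ x false) y true))
      (f (Function.update σ y true)) hp0 hp
    calc T σ + k1 σ = mu p σ * (p * (f (Function.update σ y true) - f σ) ^ 2 +
          (1 - p) / 2 * (f (Function.update (Function.update σ x false) y true) - f σ) ^ 2) := by
          simp only [hT, hk1, fill]
          rw [e1]
          ring
      _ ≤ mu p σ * (4 * (((1 - p) / (2 - p)) * (f σ - (((1 - p) / (2 - p)) * f σ +
          ((1 - p) / (2 - p)) * f (Function.update (Function.update σ x false) y true) +
          (p / (2 - p)) * f (Function.update σ y true))) ^ 2 +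
        ((1 - p) / (2 - p)) * (f (Function.update (Function.update σ x false) y true) -
          (((1 - p) / (2 - p)) * f σ +
          ((1 - p) / (2 - p)) * f (Function.update (Function.update σ x false) y true) +
          (p / (2 - p)) * f (Function.update σ y true))) ^ 2 +
        (p / (2 - p)) * (f (Function.update σ y true) - (((1 - p) / (2 - p)) * f σ +
          ((1 - p) / (2 - p)) * f (Function.update (Function.update σ x false) y true) +
          (p / (2 - p)) * f (Function.update σ y true))) ^ 2)) :=
          mul_le_mul_of_nonneg_left hk (hmu σ)
      _ = 4 * R σ := by
          simp only [hR]
          rw [hEV]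
          ring
  have hFTb : ∀ σ ∈ sFT, T σ + k2 σ ≤ 4 * R σ := by
    intro σ hσ
    obtain ⟨hσP, h1, h2⟩ := Finset.mem_filter.mp hσ
    rw [Bool.not_eq_true] at h1
    have e2 : Function.update σ y true = σ := upd_self σ y h2
    have e3 : Function.update (Function.update σ x true) y true = Function.update σ x true :=
      upd_self _ y (by rw [Function.update_of_ne (Ne.symm hxy)]; exact h2)
    have e4 : Function.update σ x false = σ := upd_self σ x h1
    have hEV : edgeVar p f x y σ =
        ((1 - p) / (2 - p)) * (f (Function.update (Function.update σ x true) y false) -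
          (((1 - p) / (2 - p)) * f (Function.update (Function.update σ x true) y false) +
          ((1 - p) / (2 - p)) * f σ +
          (p / (2 - p)) * f (Function.update σ x true))) ^ 2 +
        ((1 - p) / (2 - p)) * (f σ -
          (((1 - p) / (2 - p)) * f (Function.update (Function.update σ x true) y false) +
          ((1 - p) / (2 - p)) * f σ +
          (p / (2 - p)) * f (Function.update σ x true))) ^ 2 +
        (p / (2 - p)) * (f (Function.update σ x true) -
          (((1 - p) / (2 - p)) * f (Function.update (Function.update σ x true) y false) +
          ((1 - p) / (2 - p)) * f σ +
          (p / (2 - p)) * f (Function.update σ x true))) ^ 2 := by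
      simp only [edgeVar]
      rw [e4, e2, e3]
    have hk := keyQ p (f σ) (f (Function.update (Function.update σ x true) y false))
      (f (Function.update σ x true)) hp0 hp
    calc T σ + k2 σ = mu p σ * (p * (f (Function.update σ x true) - f σ) ^ 2 +
          (1 - p) / 2 * (f (Function.update (Function.update σ x true) y false) - f σ) ^ 2) := by
          simp only [hT, hk2, fill]
          rw [e2]
          ring
      _ ≤ mu p σ * (4 * (((1 - p) / (2 - p)) * (f σ - (((1 - p) / (2 - p)) * f σ +
          ((1 - p) / (2 - p)) * f (Function.update (Function.update σ x true) y false) +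
          (p / (2 - p)) * f (Function.update σ x true))) ^ 2 +
        ((1 - p) / (2 - p)) * (f (Function.update (Function.update σ x true) y false) -
          (((1 - p) / (2 - p)) * f σ +
          ((1 - p) / (2 - p)) * f (Function.update (Function.update σ x true) y false) +
          (p / (2 - p)) * f (Function.update σ x true))) ^ 2 +
        (p / (2 - p)) * (f (Function.update σ x true) - (((1 - p) / (2 - p)) * f σ +
          ((1 - p) / (2 - p)) * f (Function.update (Function.update σ x true) y false) +
          (p / (2 - p)) * f (Function.update σ x true))) ^ 2)) :=
          mul_le_mul_of_nonneg_left hk (hmu σ)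
      _ = 4 * R σ := by
          simp only [hR]
          rw [hEV]
          ring
  have hdisj : Disjoint sTF sFT := by
    rw [Finset.disjoint_left]
    intro a ha hb
    obtain ⟨-, h1, -⟩ := Finset.mem_filter.mp ha
    obtain ⟨-, h1', -⟩ := Finset.mem_filter.mp hb
    exact h1' h1
  have hsub : sTF ∪ sFT ⊆ P.filter (fun ω => ω x = true ∨ ω y = true) := by
    intro a ha
    rcases Finset.mem_union.mp ha with h | h
    · obtain ⟨hP', h1, h2⟩ := Finset.mem_filter.mp h
      exact Finset.mem_filter.mpr ⟨hP', Or.inl h1⟩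
    · obtain ⟨hP', h1, h2⟩ := Finset.mem_filter.mp h
      exact Finset.mem_filter.mpr ⟨hP', Or.inr h2⟩
  have hhalf : ∑ ω ∈ sFF, T ω = ∑ ω ∈ sFF, (1/2) * T ω + ∑ ω ∈ sFF, (1/2) * T ω := by
    rw [← Finset.sum_add_distrib]
    exact Finset.sum_congr rfl fun ω _ => by ring
  calc ∑ ω ∈ P, T ω
      = ((∑ ω ∈ sTT, T ω) + ∑ ω ∈ sTF, T ω) + ((∑ ω ∈ sFT, T ω) + ∑ ω ∈ sFF, T ω) := hsplit T
    _ = ∑ ω ∈ sTF, T ω + ∑ ω ∈ sFT, T ω +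
        (∑ ω ∈ sFF, (1/2) * T ω + ∑ ω ∈ sFF, (1/2) * T ω) := by
        rw [hTT0, hhalf]; ring
    _ ≤ ∑ ω ∈ sTF, T ω + ∑ ω ∈ sFT, T ω + (∑ σ ∈ sTF, k1 σ + ∑ σ ∈ sFT, k2 σ) := by
        have := hFF1; have := hFF2; linarith
    _ = ∑ σ ∈ sTF, (T σ + k1 σ) + ∑ σ ∈ sFT, (T σ + k2 σ) := by
        rw [Finset.sum_add_distrib, Finset.sum_add_distrib]; ring
    _ ≤ ∑ σ ∈ sTF, 4 * R σ + ∑ σ ∈ sFT, 4 * R σ :=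
        add_le_add (Finset.sum_le_sum hTFb) (Finset.sum_le_sum hFTb)
    _ = ∑ σ ∈ sTF ∪ sFT, 4 * R σ := (Finset.sum_union hdisj).symm
    _ ≤ ∑ σ ∈ P.filter (fun ω => ω x = true ∨ ω y = true), 4 * R σ :=
        Finset.sum_le_sum_of_subset_of_nonneg hsub
          (fun σ _ _ => mul_nonneg (by norm_num) (hRnn σ))
    _ = 4 * ∑ σ ∈ P.filter (fun ω => ω x = true ∨ ω y = true), R σ := by
        rw [Finset.mul_sum]

/-- Energy comparison: `½ Σ_{ω∈Ω₊} p·μ(ω) Σ_{(u,v)∈E⃗} (F_ω(v)-F_ω(u))² ≤ 4·D(f)`,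
where `F_ω(u) = f(ω ∪ {u})`. -/
theorem stmt15 (G : SimpleGraph V) [DecidableRel G.Adj] (p : ℝ) (hp0 : 0 < p)
    (hp : p ≤ 1 / 2) (f : (V → Bool) → ℝ) :
    (1 / 2) * ∑ ω ∈ OmegaPlus V, p * mu p ω *
        (∑ u, ∑ v ∈ G.neighborFinset u, (f (fill ω v) - f (fill ω u)) ^ 2) ≤
      4 * dirichlet G p f := by
  have hmain : ∀ u : V, ∀ v ∈ G.neighborFinset u,
      ∑ ω ∈ OmegaPlus V, p * mu p ω * (f (fill ω v) - f (fill ω u)) ^ 2 ≤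
      4 * ∑ ω ∈ (OmegaPlus V).filter (fun ω => ω u = true ∨ ω v = true),
          mu p ω * edgeVar p f u v ω := fun u v hv =>
    edge_bound p hp0 hp f u v (((G.mem_neighborFinset u v).mp hv).ne)
  unfold dirichlet
  calc (1 / 2) * ∑ ω ∈ OmegaPlus V, p * mu p ω *
        (∑ u, ∑ v ∈ G.neighborFinset u, (f (fill ω v) - f (fill ω u)) ^ 2)
      = (1 / 2) * ∑ u, ∑ v ∈ G.neighborFinset u,
          ∑ ω ∈ OmegaPlus V, p * mu p ω * (f (fill ω v) - f (fill ω u)) ^ 2 := by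
        congr 1
        simp_rw [Finset.mul_sum]
        rw [Finset.sum_comm]
        exact Finset.sum_congr rfl fun u _ => Finset.sum_comm
    _ ≤ (1 / 2) * ∑ u, ∑ v ∈ G.neighborFinset u,
          4 * ∑ ω ∈ (OmegaPlus V).filter (fun ω => ω u = true ∨ ω v = true),
            mu p ω * edgeVar p f u v ω := by
        refine mul_le_mul_of_nonneg_left ?_ (by norm_num)
        exact Finset.sum_le_sum fun u _ => Finset.sum_le_sum fun v hv => hmain u v hv
    _ = 4 * ((1 / 2) * ∑ u, ∑ v ∈ G.neighborFinset u,
          ∑ ω ∈ (OmegaPlus V).filter (fun ω => ω u = true ∨ ω v = true),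
            mu p ω * edgeVar p f u v ω) := by
        simp_rw [← Finset.mul_sum]
        ring
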